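/- (Sanov) The subgroup of SL₂(ℤ) generated by the matrices [[1,2],[0,1]] and [[1,0],[2,1]] is a free group of rank 2. -/

import Mathlib

abbrev SL2Z := Matrix.SpecialLinearGroup (Fin 2) ℤ

def SanovV : Type := {v : Fin 2 → ℤ // v ≠ 0}

instance : MulAction SL2Z SanovV where
  smul g v := ⟨Matrix.SpecialLinearGroup.toLin' g v.1, by
    intro h
    exact v.2 ((Matrix.SpecialLinearGroup.toLin' g).map_eq_zero_iff.mp h)⟩
  one_smul v := Subtype.ext <| by
    show Matrix.SpecialLinearGroup.toLin' 1 v.1 = v.1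
    rw [map_one]; rfl
  mul_smul g h v := Subtype.ext <| by
    show Matrix.SpecialLinearGroup.toLin' (g * h) v.1 = _
    rw [map_mul]; rfl

lemma sanov_smul_apply (g : SL2Z) (v : SanovV) (i : Fin 2) :
    (g • v).1 i = g.1 i 0 * v.1 0 + g.1 i 1 * v.1 1 := by
  show (Matrix.SpecialLinearGroup.toLin' g v.1) i = _
  rw [Matrix.SpecialLinearGroup.toLin'_apply, Matrix.toLin'_apply]
  simp [Matrix.mulVec, dotProduct, Fin.sum_univ_two]

def sanovA : Matrix.SpecialLinearGroup (Fin 2) ℤ :=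
  ⟨!![1, 2; 0, 1], by norm_num [Matrix.det_fin_two_of]⟩

def sanovB : Matrix.SpecialLinearGroup (Fin 2) ℤ :=
  ⟨!![1, 0; 2, 1], by norm_num [Matrix.det_fin_two_of]⟩

lemma sanovA_smul (v : SanovV) :
    (sanovA • v).1 = ![v.1 0 + 2 * v.1 1, v.1 1] := by
  funext i
  rw [sanov_smul_apply]
  fin_cases i <;> simp [sanov_smul_apply, sanovA] <;> ring

lemma sanovB_smul (v : SanovV) :
    (sanovB • v).1 = ![v.1 0, 2 * v.1 0 + v.1 1] := by
  funext i
  rw [sanov_smul_apply]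
  fin_cases i <;> simp [sanov_smul_apply, sanovB] <;> ring

lemma sanovA_inv_smul (v : SanovV) :
    (sanovA⁻¹ • v).1 = ![v.1 0 - 2 * v.1 1, v.1 1] := by
  funext i
  rw [sanov_smul_apply]
  rw [Matrix.SpecialLinearGroup.SL2_inv_expl]
  fin_cases i <;> simp [sanov_smul_apply, sanovA] <;> ring

lemma sanovB_inv_smul (v : SanovV) :
    (sanovB⁻¹ • v).1 = ![v.1 0, v.1 1 - 2 * v.1 0] := by
  funext i
  rw [sanov_smul_apply]
  rw [Matrix.SpecialLinearGroup.SL2_inv_expl]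
  fin_cases i <;> simp [sanov_smul_apply, sanovB] <;> ring

lemma SanovV.ne (v : SanovV) : v.1 0 ≠ 0 ∨ v.1 1 ≠ 0 := by
  by_contra h
  push_neg at h
  exact v.2 (funext fun i => by fin_cases i <;> simp [h.1, h.2])
def SX : Bool → Set SanovV
  | true => {v | 0 ≤ v.1 0 * v.1 1 ∧ (v.1 1) ^ 2 ≤ (v.1 0) ^ 2 ∧ v.1 0 ≠ v.1 1}
  | false => {v | 0 ≤ v.1 0 * v.1 1 ∧ ((v.1 0) ^ 2 < (v.1 1) ^ 2 ∨ v.1 0 = v.1 1)}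

def SY : Bool → Set SanovV
  | true => {v | v.1 0 * v.1 1 < 0 ∧ (v.1 1) ^ 2 ≤ (v.1 0) ^ 2}
  | false => {v | v.1 0 * v.1 1 < 0 ∧ (v.1 0) ^ 2 < (v.1 1) ^ 2}

lemma one_le_sq {a : ℤ} (h : a ≠ 0) : 1 ≤ a ^ 2 := by
  rcases h.lt_or_gt with h | h <;> nlinarith

lemma eq_zero_of_sq_le {a : ℤ} (h : a ^ 2 ≤ 0) : a = 0 := by
  by_contra h'
  have := one_le_sq h'
  linarith

lemma pingA (v : SanovV) (hv : v ∉ SY true) : sanovA • v ∈ SX true := by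
  obtain ⟨x, y, hx, hy⟩ : ∃ x y, v.1 0 = x ∧ v.1 1 = y := ⟨_, _, rfl, rfl⟩
  have hne : x ≠ 0 ∨ y ≠ 0 := by rw [← hx, ← hy]; exact v.ne
  simp only [SY, Set.mem_setOf_eq, hx, hy, not_and, not_le] at hv
  simp only [SX, Set.mem_setOf_eq, sanovA_smul, Matrix.cons_val_zero, Matrix.cons_val_one,
    Matrix.head_cons, hx, hy]
  rcases le_or_gt 0 (x * y) with hs | hs
  · refine ⟨by nlinarith [sq_nonneg y], by nlinarith [sq_nonneg x, sq_nonneg y], ?_⟩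
    intro h
    have hxy : x + y = 0 := by linarith
    have hq : (x + y) * y = 0 := by rw [hxy, zero_mul]
    have hy2 : y ^ 2 ≤ 0 := by nlinarith [hq]
    have hy0 : y = 0 := eq_zero_of_sq_le hy2
    have hx0 : x = 0 := by omega
    rcases hne with h | h
    · exact h hx0
    · exact h hy0
  · have h2 := hv hs
    refine ⟨by nlinarith [sq_nonneg (x + y)], by nlinarith [sq_nonneg (x + y)], ?_⟩
    intro h
    have hxy : x + y = 0 := by linarith
    have hq : (x + y) * (x - y) = 0 := by rw [hxy, zero_mul]
    nlinarith [hq]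

lemma pingB (v : SanovV) (hv : v ∉ SY false) : sanovB • v ∈ SX false := by
  obtain ⟨x, y, hx, hy⟩ : ∃ x y, v.1 0 = x ∧ v.1 1 = y := ⟨_, _, rfl, rfl⟩
  have hne : x ≠ 0 ∨ y ≠ 0 := by rw [← hx, ← hy]; exact v.ne
  simp only [SY, Set.mem_setOf_eq, hx, hy, not_and, not_lt] at hv
  simp only [SX, Set.mem_setOf_eq, sanovB_smul, Matrix.cons_val_zero, Matrix.cons_val_one,
    Matrix.head_cons, hx, hy]
  rcases le_or_gt 0 (x * y) with hs | hs
  · refine ⟨by nlinarith [sq_nonneg x], ?_⟩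
    rcases eq_or_ne x 0 with rfl | hx0
    · have hy0 : y ≠ 0 := by tauto
      exact Or.inl (by nlinarith [one_le_sq hy0])
    · exact Or.inl (by nlinarith [one_le_sq hx0, sq_nonneg y])
  · have h2 := hv hs
    have hx0 : x ≠ 0 := fun h => by simp [h] at hs
    rcases eq_or_ne y (-x) with rfl | hxy
    · exact ⟨by nlinarith [sq_nonneg x], Or.inr (by ring)⟩
    · have h4 : (1:ℤ) ≤ (x + y) ^ 2 := one_le_sq (fun h => hxy (by linarith))
      refine ⟨?_, Or.inl ?_⟩
      · nlinarith [sq_nonneg (x + y), one_le_sq hx0]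
      · nlinarith [h4, h2]

lemma pingA' (v : SanovV) (hv : v ∉ SX true) : sanovA⁻¹ • v ∈ SY true := by
  obtain ⟨x, y, hx, hy⟩ : ∃ x y, v.1 0 = x ∧ v.1 1 = y := ⟨_, _, rfl, rfl⟩
  have hne : x ≠ 0 ∨ y ≠ 0 := by rw [← hx, ← hy]; exact v.ne
  simp only [SX, Set.mem_setOf_eq, hx, hy, not_and] at hv
  simp only [SY, Set.mem_setOf_eq, sanovA_inv_smul, Matrix.cons_val_zero, Matrix.cons_val_one,
    Matrix.head_cons, hx, hy]
  rcases lt_or_ge (x * y) 0 with hs | hs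
  · have hy0 : y ≠ 0 := fun h => by simp [h] at hs
    exact ⟨by nlinarith [sq_nonneg y], by nlinarith [sq_nonneg x, sq_nonneg y]⟩
  · have h2 := hv hs
    rcases le_or_gt (y ^ 2) (x ^ 2) with h3 | h3
    · have h4 : x = y := by
        by_contra h
        exact h2 h3 h
      subst h4
      have hx0 : x ≠ 0 := by tauto
      exact ⟨by nlinarith [one_le_sq hx0], by nlinarith⟩
    · have hy0 : y ≠ 0 := by
        rintro rfl
        nlinarith [sq_nonneg x]
      refine ⟨?_, ?_⟩
      · nlinarith [sq_nonneg (x - y), one_le_sq hy0]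
      · nlinarith [sq_nonneg (x - y), h3]

lemma pingB' (v : SanovV) (hv : v ∉ SX false) : sanovB⁻¹ • v ∈ SY false := by
  obtain ⟨x, y, hx, hy⟩ : ∃ x y, v.1 0 = x ∧ v.1 1 = y := ⟨_, _, rfl, rfl⟩
  have hne : x ≠ 0 ∨ y ≠ 0 := by rw [← hx, ← hy]; exact v.ne
  simp only [SX, Set.mem_setOf_eq, hx, hy, not_and, not_or, not_lt] at hv
  simp only [SY, Set.mem_setOf_eq, sanovB_inv_smul, Matrix.cons_val_zero, Matrix.cons_val_one,
    Matrix.head_cons, hx, hy]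
  rcases lt_or_ge (x * y) 0 with hs | hs
  · have hx0 : x ≠ 0 := fun h => by simp [h] at hs
    exact ⟨by nlinarith [sq_nonneg x], by nlinarith [sq_nonneg x, sq_nonneg y]⟩
  · obtain ⟨h2, h3⟩ := hv hs
    have hx0 : x ≠ 0 := by
      rintro rfl
      have hy0 : y = 0 := eq_zero_of_sq_le (by simpa using h2)
      tauto
    have h4 : (1:ℤ) ≤ (x - y) ^ 2 := one_le_sq (fun h => h3 (by linarith))
    refine ⟨?_, ?_⟩
    · nlinarith [sq_nonneg (x - y), one_le_sq hx0]
    · nlinarith [h4, h2]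

theorem sanov_free :
    Function.Injective
      (FreeGroup.lift (fun b : Bool => if b then sanovA else sanovB)) := by
  apply FreeGroup.injective_lift_of_ping_pong _ SX SY
  · intro b
    cases b
    · exact ⟨⟨![0, 1], fun h => by simpa using congrFun h 1⟩, by show _ ∧ _; norm_num⟩
    · exact ⟨⟨![1, 0], fun h => by simpa using congrFun h 0⟩, by show _ ∧ _; norm_num⟩
  · intro i j hij
    rw [Function.onFun, Set.disjoint_left]
    intro v hvi hvj
    rcases i <;> rcases j <;> try exact absurd rfl hij
    all_goals simp only [SX, Set.mem_setOf_eq] at hvi hvj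
    · obtain ⟨h1, h2 | h2⟩ := hvi <;> obtain ⟨h4, h5, h6⟩ := hvj
      · linarith
      · exact h6 h2
    · obtain ⟨h1, h2, h3⟩ := hvi <;> obtain ⟨h4, h5 | h5⟩ := hvj
      · linarith
      · exact h3 h5
  · intro i j hij
    rw [Function.onFun, Set.disjoint_left]
    intro v hvi hvj
    rcases i <;> rcases j <;> try exact absurd rfl hij
    all_goals simp only [SY, Set.mem_setOf_eq] at hvi hvj
    · obtain ⟨h1, h2⟩ := hvi; obtain ⟨h4, h5⟩ := hvj; linarith
    · obtain ⟨h1, h2⟩ := hvi; obtain ⟨h4, h5⟩ := hvj; linarith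
  · intro i j
    rw [Set.disjoint_left]
    intro v hvi hvj
    rcases i <;> rcases j <;>
      simp only [SX, SY, Set.mem_setOf_eq] at hvi hvj <;>
      obtain ⟨h1, h2⟩ := hvi <;> obtain ⟨h3, h4⟩ := hvj <;> linarith
  · intro b
    rintro w ⟨v, hv, rfl⟩
    cases b
    · exact pingB v hv
    · exact pingA v hv
  · intro b
    rintro w ⟨v, hv, rfl⟩
    cases b
    · exact pingB' v hv
    · exact pingA' v hv
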